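/- Let H be a Hilbert space, e ∈ H with ‖e‖ = 1, ρ ∈ (0,1), and x ∈ H with ‖x − e‖ ≤ ρ. Then √(1 − ρ²) · ‖x‖ ≤ Re⟨x, e⟩. -/

import Mathlib

theorem stmt_3 {𝕜 H : Type*} [RCLike 𝕜] [NormedAddCommGroup H] [InnerProductSpace 𝕜 H]
    {ρ : ℝ} (hρ : ρ ∈ Set.Ioo (0 : ℝ) 1) {e : H} (he : ‖e‖ = 1)
    {x : H} (hx : ‖x - e‖ ≤ ρ) :
    Real.sqrt (1 - ρ ^ 2) * ‖x‖ ≤ RCLike.re (inner 𝕜 x e : 𝕜) := by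
  obtain ⟨hρ0, hρ1⟩ := hρ
  have hsq : ‖x - e‖ ^ 2 = ‖x‖ ^ 2 - 2 * RCLike.re (inner 𝕜 x e : 𝕜) + ‖e‖ ^ 2 :=
    @norm_sub_sq 𝕜 _ _ _ _ x e
  have h1 : ‖x - e‖ ^ 2 ≤ ρ ^ 2 := by
    apply pow_le_pow_left₀ (norm_nonneg _) hx
  have hle : (1 - ρ ^ 2) + ‖x‖ ^ 2 ≤ 2 * RCLike.re (inner 𝕜 x e : 𝕜) := by
    rw [he] at hsq; nlinarith
  have hs : Real.sqrt (1 - ρ ^ 2) ^ 2 = 1 - ρ ^ 2 := Real.sq_sqrt (by nlinarith)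
  nlinarith [two_mul_le_add_sq (Real.sqrt (1 - ρ ^ 2)) ‖x‖]
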